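/- Let J be as given, and suppose that every edge of the coding graph E_J is non-negative and that E_J contains no non-positive cycles. Then for every vertex J_μ = (μ, ν) ∈ J and every l ∈ ℕ, the collection {L_J(ω) : ω a path of length l in E_J with source J_μ} of L_J-labels of the length-l paths starting at J_μ is a partition of r(μ): the cylinder sets of these labels are pairwise disjoint and their union is Z(r(μ)). -/

import Mathlib

/-- A finite directed multigraph. -/
structure FinGraph where
  V : Type
  E : Type
  fintV : Fintype V
  fintE : Fintype E
  src : E → V
  rng : E → V

variable {G : FinGraph}

/-- A finite path in the graph `G`: a source vertex together with a compatible
list of edges (a vertex is a path of length 0). -/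
structure FPath (G : FinGraph) where
  source : G.V
  edges : List G.E
  head_src : ∀ e ∈ edges.head?, G.src e = source
  chain : edges.Chain' fun e f => G.rng e = G.src f

/-- The range (terminal vertex) of a finite path. -/
def FPath.range (p : FPath G) : G.V :=
  p.edges.getLast?.elim p.source G.rng

/-- The length-0 path at a vertex. -/
def FPath.nil (G : FinGraph) (v : G.V) : FPath G :=
  ⟨v, [], by simp, List.isChain_nil⟩

/-- `p.Prefix q` : the path `p` is an initial segment of the path `q`. -/
def FPath.Prefix (p q : FPath G) : Prop :=
  p.source = q.source ∧ p.edges <+: q.edges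

/-- The path obtained by removing the first edge (the tail `κ` of `ν = eκ`). -/
def FPath.tail (p : FPath G) : FPath G where
  source := p.edges.head?.elim p.source G.rng
  edges := p.edges.tail
  head_src := by
    cases hp : p.edges with
    | nil => simp
    | cons a l =>
      have h := p.chain
      rw [hp] at h; replace h := List.isChain_cons.1 h
      intro e he
      simp only [hp, List.head?_cons, Option.elim, List.tail_cons] at he ⊢
      exact (h.1 e he).symm
  chain := p.chain.tail

/-- An infinite path in the graph `G`. -/
structure IPath (G : FinGraph) where
  edges : ℕ → G.E
  chain : ∀ i, G.rng (edges i) = G.src (edges (i + 1))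

/-- The source vertex of an infinite path. -/
def IPath.source (p : IPath G) : G.V := G.src (p.edges 0)

/-- The cylinder set `Z(p)` of a finite path `p`: all infinite paths with prefix `p`. -/
def cylinder (p : FPath G) : Set (IPath G) :=
  {q | q.source = p.source ∧ ∀ i, (h : i < p.edges.length) → q.edges i = p.edges.get ⟨i, h⟩}

/-- A finite collection `S` of finite paths is a partition of the path `ν`:
the cylinder sets are pairwise disjoint with union `Z(ν)`. -/
def IsPartitionOfPath (S : Set (FPath G)) (ν : FPath G) : Prop :=
  S.Finite ∧ (∀ p ∈ S, ∀ q ∈ S, p ≠ q → cylinder p ∩ cylinder q = ∅) ∧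
    (⋃ p ∈ S, cylinder p) = cylinder ν

/-- A finite collection `S` of finite paths is a partition of the vertex `v`. -/
def IsPartitionOf (S : Set (FPath G)) (v : G.V) : Prop :=
  IsPartitionOfPath S (FPath.nil G v)

/-- Standing assumptions: no sinks, no sources, every cycle has an exit. -/
structure Standing (G : FinGraph) : Prop where
  no_sinks : ∀ v : G.V, ∃ e, G.src e = v
  no_sources : ∀ v : G.V, ∃ e, G.rng e = v
  cycles_exit : ∀ p : FPath G, p.edges ≠ [] → p.range = p.source →
    ∃ e ∈ p.edges, ∃ f, f ≠ e ∧ G.src f = G.src e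

/-- The combinatorial conditions making `u_J = Σ_{(μ,ν) ∈ J} S_μ S_ν^*` a unitary:
`J` is finite, `s(μ) = s(ν)`, `r(μ) = r(ν)`, `|ν| ≥ 1` for all `(μ,ν) ∈ J`, and both
families of cylinder sets are pairwise disjoint with union all of `E^∞`. -/
structure IsUnitaryJ (G : FinGraph) (J : Set (FPath G × FPath G)) : Prop where
  finite : J.Finite
  src_eq : ∀ p ∈ J, (Prod.fst p).source = (Prod.snd p).source
  rng_eq : ∀ p ∈ J, FPath.range (Prod.fst p) = FPath.range (Prod.snd p)
  ne_nil : ∀ p ∈ J, (Prod.snd p).edges ≠ []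
  disj₁ : ∀ p ∈ J, ∀ q ∈ J, p ≠ q → cylinder (Prod.fst p) ∩ cylinder (Prod.fst q) = ∅
  union₁ : (⋃ p ∈ J, cylinder (Prod.fst p)) = Set.univ
  disj₂ : ∀ p ∈ J, ∀ q ∈ J, p ≠ q → cylinder (Prod.snd p) ∩ cylinder (Prod.snd q) = ∅
  union₂ : (⋃ p ∈ J, cylinder (Prod.snd p)) = Set.univ

/-- Adjacency in the coding graph `E_J`: there is an edge from `p = (μ₁, e₁ν₁)` to
`q = (μ₂, e₂ν₂)` iff the tail `ν₁` and `μ₂` are prefix-comparable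
(the combinatorial content of `S_{ν₁}^* S_{μ₂} ≠ 0`). -/
def CGAdj (p q : FPath G × FPath G) : Prop :=
  FPath.Prefix p.2.tail q.1 ∨ FPath.Prefix q.1 p.2.tail

/-- The degree `|μ₂| − |ν₁|` of the coding-graph edge from `p` to `q`. -/
def cgDeg (p q : FPath G × FPath G) : ℤ :=
  (q.1.edges.length : ℤ) - (p.2.tail.edges.length : ℤ)

/-- `IsAppend p q r` : the path `r` is the concatenation `p q`. -/
def IsAppend (p q r : FPath G) : Prop :=
  r.source = p.source ∧ q.source = p.range ∧ r.edges = p.edges ++ q.edges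

/-- A finite path in the coding graph `E_J`, recorded by the (nonempty) list of
vertices of `J` it visits (a single vertex is a path of length 0). -/
structure CGPath (G : FinGraph) (J : Set (FPath G × FPath G)) where
  verts : List (FPath G × FPath G)
  ne : verts ≠ []
  mem : ∀ v ∈ verts, v ∈ J
  adj : verts.Chain' CGAdj

/-- The `E`-label of a path in the coding graph: the list of distinguished first
edges `e` of the second coordinates of the vertices it visits. -/
def CGPath.elabel {J : Set (FPath G × FPath G)} (ω : CGPath G J) : List G.E :=
  ω.verts.filterMap fun v => v.2.edges.head?

/-- `IsLabelOf l γ` : `γ` is the `L_J`-label of the coding-graph path visiting the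
vertices in the list `l` (all of whose edges are non-negative): the concatenation of
the `L_J`-labels of its edges, and the empty path at `r(μ)` for the length-0 path
at a vertex `(μ, eν)`. -/
inductive IsLabelOf : List (FPath G × FPath G) → FPath G → Prop
  | single (p : FPath G × FPath G) (γ : FPath G) :
      γ.edges = [] → γ.source = FPath.range p.1 → IsLabelOf [p] γ
  | cons (p q : FPath G × FPath G) (rest : List (FPath G × FPath G)) (α γ δ : FPath G) :
      IsAppend p.2.tail α q.1 → IsLabelOf (q :: rest) γ → IsAppend α γ δ →
      IsLabelOf (p :: q :: rest) δ

/-- Every edge of the coding graph `E_J` is non-negative. -/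
def AllEdgesNonneg (G : FinGraph) (J : Set (FPath G × FPath G)) : Prop :=
  ∀ p ∈ J, ∀ q ∈ J, CGAdj p q → 0 ≤ cgDeg p q

/-- The coding graph `E_J` contains a non-positive cycle. -/
def HasNonposCycle (G : FinGraph) (J : Set (FPath G × FPath G)) : Prop :=
  ∃ ω : CGPath G J, 2 ≤ ω.verts.length ∧ ω.verts.getLast ω.ne = ω.verts.head ω.ne ∧
    ω.verts.Chain' fun p q => cgDeg p q ≤ 0

/-- All outgoing edges of the vertex `p` in the coding graph `E_J` are positive. -/
def AllOutPositive (G : FinGraph) (J : Set (FPath G × FPath G))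
    (p : FPath G × FPath G) : Prop :=
  ∀ q ∈ J, CGAdj p q → 0 < cgDeg p q

/-- `IsSnoc p f q` : the path `q` is `p` extended by the single edge `f`. -/
def IsSnoc (p : FPath G) (f : G.E) (q : FPath G) : Prop :=
  q.source = p.source ∧ q.edges = p.edges ++ [f]

/-- `IsSplitting G J p J'` : `J'` is the splitting of `J` at the vertex `p = (μ, eν)`,
i.e. `J' = (J ∖ {(μ,eν)}) ∪ {(μf, eνf) : f ∈ E¹, s(f) = r(μ)}`. -/
def IsSplitting (G : FinGraph) (J : Set (FPath G × FPath G)) (p : FPath G × FPath G)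
    (J' : Set (FPath G × FPath G)) : Prop :=
  p ∈ J ∧ ∀ q, q ∈ J' ↔ (q ∈ J ∧ q ≠ p) ∨
    ∃ f, G.src f = FPath.range p.1 ∧ IsSnoc p.1 f q.1 ∧ IsSnoc p.2 f q.2

/-- The set of negative edges of the coding graph `E_J`. -/
def negEdgeSet (G : FinGraph) (J : Set (FPath G × FPath G)) :
    Set ((FPath G × FPath G) × (FPath G × FPath G)) :=
  {e | e.1 ∈ J ∧ e.2 ∈ J ∧ CGAdj e.1 e.2 ∧ cgDeg e.1 e.2 < 0}

/-- `IsFinalNeg G J p q ω d` : the edge from `p` to `q` in `E_J` is a final negative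
edge with destination `d`, via the zero path `ω` from `q` to `d`; the height of the
edge is `ω.verts.length - 1`. -/
def IsFinalNeg (G : FinGraph) (J : Set (FPath G × FPath G))
    (p q : FPath G × FPath G) (ω : CGPath G J) (d : FPath G × FPath G) : Prop :=
  p ∈ J ∧ q ∈ J ∧ CGAdj p q ∧ cgDeg p q < 0 ∧
    ω.verts.head ω.ne = q ∧ ω.verts.getLast ω.ne = d ∧
    (ω.verts.Chain' fun a b => cgDeg a b = 0) ∧ AllOutPositive G J d

/-- `(E_J, E)` is left-synchronizing with delay `m` : any two paths of length `m`
(i.e. with `m+1` vertices) in `E_J` with the same `E`-label have the same source. -/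
def LeftSyncDelay (G : FinGraph) (J : Set (FPath G × FPath G)) (m : ℕ) : Prop :=
  ∀ ω ξ : CGPath G J, ω.verts.length = m + 1 → ξ.verts.length = m + 1 →
    ω.elabel = ξ.elabel → ω.verts.head ω.ne = ξ.verts.head ξ.ne

/-- An infinite path in the coding graph `E_J`. -/
structure CGIPath (G : FinGraph) (J : Set (FPath G × FPath G)) where
  verts : ℕ → FPath G × FPath G
  mem : ∀ i, verts i ∈ J
  adj : ∀ i, CGAdj (verts i) (verts (i + 1))

/-- The infinite `E`-label of an infinite coding-graph path is the infinite path `α`. -/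
def ELabelInf {J : Set (FPath G × FPath G)} (ω : CGIPath G J) (α : IPath G) : Prop :=
  ∀ i, (ω.verts i).2.edges.head? = some (α.edges i)

/-- A transducer with input alphabet `A`, output alphabet `B`, a finite state set,
an initial state and a transition function. -/
structure Transducer (A B : Type) where
  S : Type
  finS : Finite S
  init : S
  tr : S → A → S × List B

/-- The state sequence of a transducer on an infinite input word. -/
def Transducer.states {A B : Type} (T : Transducer A B) (α : ℕ → A) : ℕ → T.S
  | 0 => T.init
  | n + 1 => (T.tr (T.states α n) (α n)).1

/-- The `n`-th output block of a transducer on an infinite input word. -/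
def Transducer.outBlock {A B : Type} (T : Transducer A B) (α : ℕ → A) (n : ℕ) : List B :=
  (T.tr (T.states α n) (α n)).2

/-- The concatenation of the first `n` blocks of a sequence of finite words. -/
def joinUpTo {X : Type} (f : ℕ → List X) (n : ℕ) : List X :=
  ((List.range n).map f).flatten

/-- Two infinite concatenations of sequences of finite words are equal. -/
def StreamsEq {X : Type} (f g : ℕ → List X) : Prop :=
  (∀ n, ∃ m, joinUpTo f n <+: joinUpTo g m) ∧ ∀ n, ∃ m, joinUpTo g n <+: joinUpTo f m

/-- The type of edges of the coding graph `E_J`. -/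
def CGEdgeT (G : FinGraph) (J : Set (FPath G × FPath G)) : Type :=
  {e : (FPath G × FPath G) × (FPath G × FPath G) // e.1 ∈ J ∧ e.2 ∈ J ∧ CGAdj e.1 e.2}

/-- The sequence of edges of an infinite coding-graph path. -/
def CGIPath.edgeSeq {J : Set (FPath G × FPath G)} (ω : CGIPath G J) (i : ℕ) : CGEdgeT G J :=
  ⟨(ω.verts i, ω.verts (i + 1)), ω.mem i, ω.mem (i + 1), ω.adj i⟩


/-! ### Auxiliary lemmas -/

section Aux
variable {G : FinGraph}

theorem FPath.ext' {p q : FPath G} (h1 : p.source = q.source) (h2 : p.edges = q.edges) :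
    p = q := by
  cases p; cases q; simp_all

theorem IPath.ext' {p q : IPath G} (h : p.edges = q.edges) : p = q := by
  cases p; cases q; simp_all

theorem getElem_congr_idx' {β : Type*} {l : List β} {i j : ℕ} (h : i = j) (hi : i < l.length) :
    l[i]'hi = l[j]'(h ▸ hi) := by subst h; rfl

theorem FPath.range_eq_source {p : FPath G} (h : p.edges = []) : p.range = p.source := by
  simp [FPath.range, h]

theorem FPath.range_eq_rng {p : FPath G} {e : G.E} (h : p.edges.getLast? = some e) :
    p.range = G.rng e := by
  simp [FPath.range, h]

theorem FPath.range_congr {p q : FPath G} (h1 : p.source = q.source) (h2 : p.edges = q.edges) :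
    p.range = q.range := by
  simp [FPath.range, h1, h2]

theorem FPath.range_eq_rng_get {p : FPath G} {i : ℕ} (h : i + 1 = p.edges.length) :
    p.range = G.rng (p.edges.get ⟨i, by omega⟩) := by
  have hne : p.edges ≠ [] := by
    intro hc; rw [hc] at h; simp at h
  have hl : p.edges.getLast? = some (p.edges[p.edges.length - 1]) := by
    rw [List.getLast?_eq_getLast hne, List.getLast_eq_getElem]
  rw [FPath.range_eq_rng hl]
  congr 1
  simp only [List.get_eq_getElem]
  congr 1
  omega

theorem FPath.tail_source {p : FPath G} {e : G.E} (h : p.edges.head? = some e) :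
    p.tail.source = G.rng e := by
  simp [FPath.tail, h]

theorem FPath.tail_range {p : FPath G} (h : p.edges ≠ []) : p.tail.range = p.range := by
  cases hp : p.edges with
  | nil => exact absurd hp h
  | cons e t =>
    have htail : p.tail.edges = t := by simp [FPath.tail, hp]
    cases t with
    | nil =>
      rw [FPath.range_eq_source htail, FPath.tail_source (by rw [hp]; rfl),
        FPath.range_eq_rng (by rw [hp]; rfl)]
      simp
    | cons f t' =>
      have hne : f :: t' ≠ [] := by simp
      have hg : (f :: t').getLast? = some ((f :: t').getLast hne) :=
        List.getLast?_eq_getLast hne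
      have h1 : p.tail.edges.getLast? = some ((f :: t').getLast hne) := by rw [htail, hg]
      have h2 : p.edges.getLast? = some ((f :: t').getLast hne) := by
        rw [hp, List.getLast?_cons_cons, hg]
      rw [FPath.range_eq_rng h1, FPath.range_eq_rng h2]

/-- Concatenation of finite paths. -/
def FPath.fappend (p q : FPath G) (h : q.source = p.range) : FPath G where
  source := p.source
  edges := p.edges ++ q.edges
  head_src := by
    intro e he
    cases hp : p.edges with
    | nil =>
      rw [hp, List.nil_append] at he
      rw [q.head_src e he, h, FPath.range_eq_source hp]
    | cons a t =>
      rw [hp, List.cons_append, List.head?_cons] at he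
      simp only [Option.mem_def, Option.some.injEq] at he
      subst he
      exact p.head_src _ (by rw [hp]; simp)
  chain := by
    rw [List.Chain', List.isChain_append]
    refine ⟨p.chain, q.chain, ?_⟩
    intro x hx y hy
    rw [q.head_src y hy, h, FPath.range_eq_rng hx]

theorem isAppend_fappend (p q : FPath G) (h : q.source = p.range) :
    IsAppend p q (p.fappend q h) := ⟨rfl, h, rfl⟩

theorem IsAppend.prefix_left {p q r : FPath G} (h : IsAppend p q r) : p.Prefix r :=
  ⟨h.1.symm, ⟨q.edges, h.2.2.symm⟩⟩

theorem IsAppend.unique {p q r r' : FPath G} (h : IsAppend p q r) (h' : IsAppend p q r') :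
    r = r' :=
  FPath.ext' (h.1.trans h'.1.symm) (h.2.2.trans h'.2.2.symm)

theorem IsAppend.unique_mid {p q q' r : FPath G} (h : IsAppend p q r) (h' : IsAppend p q' r) :
    q = q' :=
  FPath.ext' (h.2.1.trans h'.2.1.symm) (List.append_cancel_left (h.2.2.symm.trans h'.2.2))

theorem IsAppend.range_eq {p q r : FPath G} (h : IsAppend p q r) : r.range = q.range := by
  cases hq : q.edges with
  | nil =>
    have he : r.edges = p.edges := by rw [h.2.2, hq, List.append_nil]
    rw [FPath.range_congr h.1 he, ← h.2.1, FPath.range_eq_source hq]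
  | cons a t =>
    have hg : (a :: t).getLast? = some ((a :: t).getLast (by simp)) :=
      List.getLast?_eq_getLast (by simp)
    have h1 : r.edges.getLast? = some ((a :: t).getLast (by simp)) := by
      rw [h.2.2, hq, List.getLast?_append, hg]; rfl
    have h2 : q.edges.getLast? = some ((a :: t).getLast (by simp)) := by rw [hq, hg]
    rw [FPath.range_eq_rng h1, FPath.range_eq_rng h2]

theorem exists_isAppend_of_prefix {p r : FPath G} (h : p.Prefix r) :
    ∃ q : FPath G, IsAppend p q r := by
  obtain ⟨hs, t, ht⟩ := h
  have hch := r.chain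
  rw [← ht, List.Chain', List.isChain_append] at hch
  obtain ⟨-, hct, hlink⟩ := hch
  refine ⟨⟨p.range, t, ?_, hct⟩, hs.symm, rfl, ht.symm⟩
  intro e he
  cases hp : p.edges.getLast? with
  | none =>
    have hpn : p.edges = [] := List.getLast?_eq_none_iff.mp hp
    rw [FPath.range_eq_source hpn, hs]
    exact r.head_src e (by rw [← ht, hpn, List.nil_append]; exact he)
  | some g =>
    rw [FPath.range_eq_rng hp]
    exact (hlink g (by rw [hp]; rfl) e he).symm

theorem mem_cylinder_nil {v : G.V} {x : IPath G} :
    x ∈ cylinder (FPath.nil G v) ↔ x.source = v := by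
  simp [cylinder, FPath.nil]

theorem cylinder_mono {p r : FPath G} (h : p.Prefix r) : cylinder r ⊆ cylinder p := by
  intro x hx
  refine ⟨hx.1.trans h.1.symm, ?_⟩
  intro i hi
  have hi' : i < r.edges.length := lt_of_lt_of_le hi h.2.length_le
  have := hx.2 i hi'
  rw [this]
  simp only [List.get_eq_getElem]
  exact (h.2.getElem hi).symm

/-- The infinite path obtained from `x` by deleting the first `n` edges. -/
def IPath.dropN (x : IPath G) (n : ℕ) : IPath G where
  edges i := x.edges (i + n)
  chain i := by simpa [show i + 1 + n = i + n + 1 by omega] using x.chain (i + n)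

theorem dropN_source {x : IPath G} {p : FPath G} (hx : x ∈ cylinder p) :
    (x.dropN p.edges.length).source = p.range := by
  rcases eq_or_ne p.edges [] with h | h
  · show G.src (x.edges (0 + p.edges.length)) = p.range
    rw [h, FPath.range_eq_source h]
    exact hx.1
  · have hlen : 0 < p.edges.length := by
      cases hp : p.edges with
      | nil => exact absurd hp h
      | cons a t => simp [hp]
    have hc := x.chain (p.edges.length - 1)
    rw [show p.edges.length - 1 + 1 = p.edges.length by omega] at hc
    have h2 := hx.2 (p.edges.length - 1) (by omega)
    show G.src (x.edges (0 + p.edges.length)) = p.range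
    rw [Nat.zero_add, ← hc, h2, FPath.range_eq_rng_get (i := p.edges.length - 1) (by omega)]

/-- Prepending a finite path to an infinite path. -/
def FPath.consInf (p : FPath G) (x : IPath G) (h : x.source = p.range) : IPath G where
  edges i := if hi : i < p.edges.length then p.edges.get ⟨i, hi⟩ else x.edges (i - p.edges.length)
  chain i := by
    rcases lt_trichotomy (i + 1) p.edges.length with h1 | h1 | h1
    · have hi : i < p.edges.length := by omega
      simp only [dif_pos h1, dif_pos hi]
      exact List.isChain_iff_getElem.mp p.chain i (by omega)
    · have hi : i < p.edges.length := by omega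
      simp only [dif_pos hi, dif_neg (show ¬ i + 1 < p.edges.length by omega)]
      rw [show i + 1 - p.edges.length = 0 by omega]
      have hx0 : G.src (x.edges 0) = x.source := rfl
      rw [hx0, h, FPath.range_eq_rng_get h1]
    · have hi : ¬ i < p.edges.length := by omega
      simp only [dif_neg hi, dif_neg (show ¬ i + 1 < p.edges.length by omega)]
      rw [show i + 1 - p.edges.length = i - p.edges.length + 1 by omega]
      exact x.chain (i - p.edges.length)

theorem consInf_mem_cylinder (p : FPath G) (x : IPath G) (h : x.source = p.range) :
    p.consInf x h ∈ cylinder p := by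
  constructor
  · show G.src ((p.consInf x h).edges 0) = p.source
    by_cases h0 : 0 < p.edges.length
    · show G.src (if hi : 0 < p.edges.length then p.edges.get ⟨0, hi⟩
        else x.edges (0 - p.edges.length)) = p.source
      rw [dif_pos h0]
      apply p.head_src
      rw [List.head?_eq_getElem?]
      simp only [List.get_eq_getElem]
      exact (List.getElem?_eq_getElem h0).symm ▸ rfl
    · have hnil : p.edges = [] := by
        cases hp : p.edges with
        | nil => rfl
        | cons a t => rw [hp] at h0; simp at h0
      show G.src (if hi : 0 < p.edges.length then p.edges.get ⟨0, hi⟩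
        else x.edges (0 - p.edges.length)) = p.source
      rw [dif_neg h0]
      have : (0 : ℕ) - p.edges.length = 0 := by omega
      rw [this]
      exact h.trans (FPath.range_eq_source hnil)
  · intro i hi
    show (if hi' : i < p.edges.length then p.edges.get ⟨i, hi'⟩
      else x.edges (i - p.edges.length)) = p.edges.get ⟨i, hi⟩
    rw [dif_pos hi]

theorem dropN_consInf (p : FPath G) (x : IPath G) (h : x.source = p.range) :
    (p.consInf x h).dropN p.edges.length = x := by
  apply IPath.ext'
  funext i
  show (if hi : i + p.edges.length < p.edges.length then p.edges.get ⟨i + p.edges.length, hi⟩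
    else x.edges (i + p.edges.length - p.edges.length)) = x.edges i
  rw [dif_neg (by omega)]
  congr 1
  omega

theorem mem_cylinder_append {p q r : FPath G} (h : IsAppend p q r) {x : IPath G} :
    x ∈ cylinder r ↔ x ∈ cylinder p ∧ x.dropN p.edges.length ∈ cylinder q := by
  have hlen : r.edges.length = p.edges.length + q.edges.length := by
    rw [h.2.2]; simp
  constructor
  · intro hx
    have hxp : x ∈ cylinder p := by
      refine ⟨hx.1.trans h.1, ?_⟩
      intro i hi
      have hi' : i < r.edges.length := by omega
      rw [hx.2 i hi']
      simp only [List.get_eq_getElem]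
      exact (List.getElem_of_eq h.2.2 hi').trans (List.getElem_append_left hi)
    refine ⟨hxp, ?_, ?_⟩
    · rw [show (x.dropN p.edges.length).source = p.range from dropN_source hxp, ← h.2.1]
    · intro i hi
      have hi' : i + p.edges.length < r.edges.length := by omega
      show x.edges (i + p.edges.length) = _
      rw [hx.2 (i + p.edges.length) hi']
      simp only [List.get_eq_getElem]
      refine ((List.getElem_of_eq h.2.2 hi').trans
        (List.getElem_append_right (by omega))).trans ?_
      exact getElem_congr_idx' (by omega) (by omega)
  · rintro ⟨hxp, hxq⟩
    refine ⟨hxp.1.trans h.1.symm, ?_⟩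
    intro i hi
    simp only [List.get_eq_getElem]
    by_cases hip : i < p.edges.length
    · rw [hxp.2 i hip]
      simp only [List.get_eq_getElem]
      exact ((List.getElem_append_left hip).symm.trans
        (List.getElem_of_eq h.2.2.symm (by rw [List.length_append]; omega)))
    · have hiq : i - p.edges.length < q.edges.length := by omega
      have hxe : x.edges i = (x.dropN p.edges.length).edges (i - p.edges.length) := by
        show x.edges i = x.edges (i - p.edges.length + p.edges.length)
        congr 1
        omega
      rw [hxe, hxq.2 (i - p.edges.length) hiq]
      simp only [List.get_eq_getElem]
      exact ((List.getElem_append_right (by omega : p.edges.length ≤ i)).symm.trans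
        (List.getElem_of_eq h.2.2.symm (by rw [List.length_append]; omega)))

theorem cylinder_append_disjoint {α γ1 γ2 δ1 δ2 : FPath G}
    (h1 : IsAppend α γ1 δ1) (h2 : IsAppend α γ2 δ2)
    (hd : cylinder γ1 ∩ cylinder γ2 = ∅) : cylinder δ1 ∩ cylinder δ2 = ∅ := by
  rw [Set.eq_empty_iff_forall_notMem] at hd ⊢
  rintro x ⟨hx1, hx2⟩
  exact hd (x.dropN α.edges.length)
    ⟨((mem_cylinder_append h1).mp hx1).2, ((mem_cylinder_append h2).mp hx2).2⟩

theorem cylinder_cancel_disjoint {κ α1 α2 r1 r2 : FPath G}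
    (h1 : IsAppend κ α1 r1) (h2 : IsAppend κ α2 r2)
    (hd : cylinder r1 ∩ cylinder r2 = ∅) : cylinder α1 ∩ cylinder α2 = ∅ := by
  rw [Set.eq_empty_iff_forall_notMem] at hd ⊢
  rintro x ⟨hx1, hx2⟩
  have hs : x.source = κ.range := hx1.1.trans h1.2.1
  refine hd (κ.consInf x hs) ⟨?_, ?_⟩
  · rw [mem_cylinder_append h1]
    exact ⟨consInf_mem_cylinder _ _ _, by rw [dropN_consInf]; exact hx1⟩
  · rw [mem_cylinder_append h2]
    exact ⟨consInf_mem_cylinder _ _ _, by rw [dropN_consInf]; exact hx2⟩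

theorem prefix_of_mem_of_le {p q : FPath G} {x : IPath G}
    (hp : x ∈ cylinder p) (hq : x ∈ cylinder q) (hle : p.edges.length ≤ q.edges.length) :
    p.Prefix q := by
  refine ⟨hp.1.symm.trans hq.1, ?_⟩
  rw [List.prefix_iff_eq_take]
  refine List.ext_getElem (by simp [List.length_take, Nat.min_eq_left hle]) ?_
  intro n h1 h2
  rw [List.getElem_take]
  have e1 := hp.2 n h1
  have e2 := hq.2 n (lt_of_lt_of_le h1 hle)
  simp only [List.get_eq_getElem] at e1 e2
  rw [← e1, ← e2]

theorem prefix_or_prefix_of_mem {p q : FPath G} {x : IPath G}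
    (hp : x ∈ cylinder p) (hq : x ∈ cylinder q) : p.Prefix q ∨ q.Prefix p := by
  rcases le_total p.edges.length q.edges.length with h | h
  · exact Or.inl (prefix_of_mem_of_le hp hq h)
  · exact Or.inr (prefix_of_mem_of_le hq hp h)

theorem isLabelOf_unique {L : List (FPath G × FPath G)} {γ γ' : FPath G}
    (h : IsLabelOf L γ) (h' : IsLabelOf L γ') : γ = γ' := by
  induction h generalizing γ' with
  | single p γ he hs =>
    cases h' with
    | single _ _ he' hs' => exact FPath.ext' (hs.trans hs'.symm) (he.trans he'.symm)
  | cons p q rest α γ δ h1 h2 h3 ih =>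
    cases h' with
    | cons _ _ _ α' γ'' δ' h1' h2' h3' =>
      obtain rfl := h1.unique_mid h1'
      obtain rfl := ih h2'
      exact h3.unique h3'

theorem finite_listSet {J : Set (FPath G × FPath G)} (hJ : J.Finite) (n : ℕ) :
    {L : List (FPath G × FPath G) | L.length = n ∧ ∀ v ∈ L, v ∈ J}.Finite := by
  induction n with
  | zero =>
    apply Set.Finite.subset (Set.finite_singleton ([] : List (FPath G × FPath G)))
    rintro L ⟨hL, -⟩
    simp [List.length_eq_zero_iff.mp hL]
  | succ n ih =>
    apply Set.Finite.subset ((hJ.prod ih).image fun x => x.1 :: x.2)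
    rintro L ⟨hL, hm⟩
    cases L with
    | nil => simp at hL
    | cons a t =>
      simp only [List.length_cons, Nat.add_right_cancel_iff] at hL
      exact ⟨(a, t), ⟨hm a (by simp), hL, fun v hv => hm v (by simp [hv])⟩, rfl⟩

theorem S_finite {J : Set (FPath G × FPath G)} (hJf : J.Finite) (l : ℕ)
    (p : FPath G × FPath G) :
    {γ : FPath G | ∃ ω : CGPath G J, ω.verts.length = l + 1 ∧
      ω.verts.head ω.ne = p ∧ IsLabelOf ω.verts γ}.Finite := by
  have hsub : {γ : FPath G | ∃ ω : CGPath G J, ω.verts.length = l + 1 ∧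
      ω.verts.head ω.ne = p ∧ IsLabelOf ω.verts γ} ⊆
      ⋃ L ∈ {L : List (FPath G × FPath G) | L.length = l + 1 ∧ ∀ v ∈ L, v ∈ J},
        {γ : FPath G | IsLabelOf L γ} := by
    rintro γ ⟨ω, h1, -, h3⟩
    exact Set.mem_biUnion ⟨h1, ω.mem⟩ h3
  refine Set.Finite.subset (Set.Finite.biUnion (finite_listSet hJf (l + 1)) fun L _ => ?_) hsub
  exact Set.Subsingleton.finite fun a ha b hb => isLabelOf_unique ha hb

theorem mem_S_succ {J : Set (FPath G × FPath G)} {p : FPath G × FPath G} (hp : p ∈ J)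
    (l : ℕ) {γ : FPath G} :
    (∃ ω : CGPath G J, ω.verts.length = l + 1 + 1 ∧ ω.verts.head ω.ne = p ∧
      IsLabelOf ω.verts γ) ↔
    ∃ q ∈ J, CGAdj p q ∧ ∃ α γ' : FPath G, IsAppend p.2.tail α q.1 ∧
      (∃ ω' : CGPath G J, ω'.verts.length = l + 1 ∧ ω'.verts.head ω'.ne = q ∧
        IsLabelOf ω'.verts γ') ∧ IsAppend α γ' γ := by
  constructor
  · rintro ⟨⟨verts, ne, mem, adj⟩, hlen, hhead, hlab⟩
    cases verts with
    | nil => exact absurd rfl ne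
    | cons a t =>
      cases t with
      | nil => simp at hlen
      | cons b t' =>
        obtain rfl : a = p := hhead
        simp only [CGPath.verts] at hlab adj hlen
        cases hlab with
        | cons _ _ _ α γ' δ h1 h2 h3 =>
          rw [List.Chain', List.isChain_cons_cons] at adj
          refine ⟨b, mem b (by simp), adj.1, α, γ', h1,
            ⟨⟨b :: t', by simp, fun v hv => mem v (List.mem_cons_of_mem _ hv), adj.2⟩,
              by simpa using hlen, rfl, h2⟩, h3⟩
  · rintro ⟨q, hq, hadj, α, γ', h1, ⟨ω', hlen', hhead', hlab'⟩, h3⟩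
    have hv' : ω'.verts = q :: ω'.verts.tail := by
      conv_lhs => rw [← List.cons_head_tail ω'.ne]
      rw [hhead']
    refine ⟨⟨p :: ω'.verts, by simp, ?_, ?_⟩, by simp [hlen'], rfl, ?_⟩
    · rintro v hv
      rcases List.mem_cons.mp hv with rfl | hv
      · exact hp
      · exact ω'.mem v hv
    · rw [List.Chain', List.isChain_cons]
      refine ⟨?_, ω'.adj⟩
      intro b hb
      rw [hv'] at hb
      simp only [List.head?_cons, Option.mem_def, Option.some.injEq] at hb
      subst hb
      exact hadj
    · show IsLabelOf (p :: ω'.verts) γ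
      rw [hv']
      exact IsLabelOf.cons p q ω'.verts.tail α γ' γ h1 (hv' ▸ hlab') h3

end Aux

/-- Lemma 5.3: if all edges of `E_J` are non-negative and `E_J` has no
non-positive cycles, then for every vertex `J_μ ∈ J` and every `l`, the `L_J`-labels of
the length-`l` paths in `E_J` starting at `J_μ` form a partition of `r(μ)`. -/
theorem out_paths_partition (G : FinGraph) (hG : Standing G)
    (J : Set (FPath G × FPath G)) (hJ : IsUnitaryJ G J)
    (hnn : AllEdgesNonneg G J) (hnc : ¬ HasNonposCycle G J)
    (p : FPath G × FPath G) (hp : p ∈ J) (l : ℕ) :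
    IsPartitionOf {γ : FPath G | ∃ ω : CGPath G J, ω.verts.length = l + 1 ∧
        ω.verts.head ω.ne = p ∧ IsLabelOf ω.verts γ}
      (FPath.range p.1) := by
  induction l generalizing p hp with
  | zero =>
    have hset : {γ : FPath G | ∃ ω : CGPath G J, ω.verts.length = 0 + 1 ∧
        ω.verts.head ω.ne = p ∧ IsLabelOf ω.verts γ}
        = {FPath.nil G (FPath.range p.1)} := by
      ext γ
      simp only [Set.mem_setOf_eq, Set.mem_singleton_iff]
      constructor
      · rintro ⟨⟨verts, ne, mem, adj⟩, h1, h2, h3⟩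
        simp only [CGPath.verts] at h1 h2 h3
        obtain ⟨a, rfl⟩ := List.length_eq_one_iff.mp h1
        obtain rfl : a = p := h2
        cases h3 with
        | single _ _ he hs => exact FPath.ext' hs he
      · rintro rfl
        exact ⟨⟨[p], by simp, by simpa, List.isChain_singleton p⟩, rfl, rfl,
          IsLabelOf.single p _ rfl rfl⟩
    rw [hset]
    refine ⟨Set.finite_singleton _, ?_, by simp⟩
    intro a ha b hb hne
    rw [Set.mem_singleton_iff] at ha hb
    exact absurd (ha.trans hb.symm) hne
  | succ l ih =>
    refine ⟨S_finite hJ.finite (l + 1) p, ?_, ?_⟩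
    · intro γ1 hγ1 γ2 hγ2 hne
      obtain ⟨q1, hq1, hadj1, α1, γ1', h11, hS1, h13⟩ := (mem_S_succ hp l).mp hγ1
      obtain ⟨q2, hq2, hadj2, α2, γ2', h21, hS2, h23⟩ := (mem_S_succ hp l).mp hγ2
      by_cases hqq : q1 = q2
      · subst hqq
        obtain rfl : α1 = α2 := h11.unique_mid h21
        have hne' : γ1' ≠ γ2' := by
          rintro rfl
          exact hne (h13.unique h23)
        exact cylinder_append_disjoint h13 h23 ((ih q1 hq1).2.1 γ1' hS1 γ2' hS2 hne')
      · have hd := hJ.disj₁ q1 hq1 q2 hq2 hqq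
        have hα := cylinder_cancel_disjoint h11 h21 hd
        have hsub := Set.inter_subset_inter (cylinder_mono h13.prefix_left)
          (cylinder_mono h23.prefix_left)
        rw [hα] at hsub
        exact Set.subset_empty_iff.mp hsub
    · apply subset_antisymm
      · intro x hx
        simp only [Set.mem_iUnion] at hx
        obtain ⟨γ, hγ, hxγ⟩ := hx
        obtain ⟨q, hq, hadj, α, γ', h1, hS, h3⟩ := (mem_S_succ hp l).mp hγ
        rw [mem_cylinder_nil, hxγ.1, h3.1, h1.2.1, FPath.tail_range (hJ.ne_nil p hp),
          ← hJ.rng_eq p hp]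
      · intro x hx
        rw [mem_cylinder_nil] at hx
        have hsrc : x.source = p.2.tail.range := by
          rw [hx, hJ.rng_eq p hp, ← FPath.tail_range (hJ.ne_nil p hp)]
        have hyu : p.2.tail.consInf x hsrc ∈ ⋃ q ∈ J, cylinder (Prod.fst q) := by
          rw [hJ.union₁]; trivial
        simp only [Set.mem_iUnion] at hyu
        obtain ⟨q, hq, hyq⟩ := hyu
        have hyκ : p.2.tail.consInf x hsrc ∈ cylinder p.2.tail := consInf_mem_cylinder _ _ _
        have hadj : CGAdj p q := prefix_or_prefix_of_mem hyκ hyq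
        have hdeg := hnn p hp q hq hadj
        have hlen : p.2.tail.edges.length ≤ q.1.edges.length := by
          simp only [cgDeg] at hdeg; omega
        have hpre : p.2.tail.Prefix q.1 := by
          rcases hadj with h | h
          · exact h
          · refine ⟨h.1.symm, ?_⟩
            have he : q.1.edges = p.2.tail.edges :=
              h.2.eq_of_length (le_antisymm h.2.length_le hlen)
            rw [he]
        obtain ⟨α, hα⟩ := exists_isAppend_of_prefix hpre
        have hxα : x ∈ cylinder α := by
          have hmem := (mem_cylinder_append hα).mp hyq
          have := hmem.2
          rwa [dropN_consInf] at this
        have hx' : x.dropN α.edges.length ∈ cylinder (FPath.nil G (FPath.range q.1)) := by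
          rw [mem_cylinder_nil, dropN_source hxα, hα.range_eq]
        rw [← (ih q hq).2.2] at hx'
        simp only [Set.mem_iUnion] at hx'
        obtain ⟨γ', hγ', hxγ'⟩ := hx'
        have hγs : γ'.source = α.range := by
          rw [← hxγ'.1, dropN_source hxα]
        refine Set.mem_biUnion ?_ ((mem_cylinder_append (isAppend_fappend α γ' hγs)).mpr
          ⟨hxα, hxγ'⟩)
        exact (mem_S_succ hp l).mpr ⟨q, hq, hadj, α, γ', hα, hγ',
          isAppend_fappend α γ' hγs⟩
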